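/- Let X be a standard Borel space, μ a Borel probability measure on X, and f : X → X a bijection such that f and f⁻¹ are measurable and f preserves μ. Let m be a sub-σ-algebra of the Borel σ-algebra of X, and for a sub-σ-algebra m′ let κ^{m′} : X → Measure(X) denote the regular conditional distribution of μ given m′ (a μ-a.e. unique m′-measurable kernel κ^{m′} such that for every bounded measurable g, x ↦ ∫ g dκ^{m′}(x) is a version of the conditional expectation of g given m′). Then for every n ∈ ℕ, for μ-almost every x ∈ X, κ^{m_n}(x) = (f^n)_* ( κ^{m}(f^{−n}(x)) ), where m_n = {S ⊆ X measurable : (f^n)^{-1}(S) ∈ m} is the image σ-algebra of m under f^n. -/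

import Mathlib

open MeasureTheory

private lemma stmt2_aux {X : Type*} {m m' : MeasurableSpace X} [mX : MeasurableSpace X]
    [MeasurableSpace.CountablyGenerated X]
    (μ : Measure X) [IsProbabilityMeasure μ]
    (e : X ≃ᵐ X) (hfe : MeasurePreserving (⇑e) μ μ) (hfe' : MeasurePreserving (⇑e.symm) μ μ)
    (hm : m ≤ mX)
    (hm'_iff : ∀ s : Set X, MeasurableSet[m'] s ↔ MeasurableSet[m] (⇑e ⁻¹' s))
    (κ κn : X → Measure X)
    (hκprob : ∀ x, IsProbabilityMeasure (κ x))
    (hκ : ∀ g : X → ℝ, Measurable g → (∃ C : ℝ, ∀ x, |g x| ≤ C) →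
      (fun x => ∫ y, g y ∂(κ x)) =ᵐ[μ] μ[g | m])
    (hκnprob : ∀ x, IsProbabilityMeasure (κn x))
    (hκn : ∀ g : X → ℝ, Measurable g → (∃ C : ℝ, ∀ x, |g x| ≤ C) →
      (fun x => ∫ y, g y ∂(κn x)) =ᵐ[μ] μ[g | m']) :
    ∀ᵐ x ∂μ, κn x = Measure.map (⇑e) (κ (⇑e.symm x)) := by
  classical
  have hm' : m' ≤ mX := by
    intro s hs
    have h1 : MeasurableSet (⇑e ⁻¹' s) := hm _ ((hm'_iff s).1 hs)
    have hseq : s = ⇑e.symm ⁻¹' (⇑e ⁻¹' s) := by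
      ext x; simp
    rw [hseq]
    exact e.symm.measurable h1
  haveI : SigmaFinite (μ.trim hm') := by infer_instance
  haveI : SigmaFinite (μ.trim hm) := by infer_instance
  -- key: for every bounded measurable g, the two kernels have a.e. equal integrals
  have key : ∀ g : X → ℝ, Measurable g → (∃ C : ℝ, ∀ x, |g x| ≤ C) →
      (fun x => ∫ y, g y ∂(κn x)) =ᵐ[μ]
        (fun x => ∫ y, g y ∂(Measure.map (⇑e) (κ (⇑e.symm x)))) := by
    intro g hg hgbd
    obtain ⟨C, hC⟩ := hgbd
    have hgint : Integrable g μ :=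
      ⟨hg.aestronglyMeasurable, HasFiniteIntegral.of_bounded (C := C)
        (Filter.Eventually.of_forall fun x => by simpa [Real.norm_eq_abs] using hC x)⟩
    have hge : Measurable (g ∘ ⇑e) := hg.comp e.measurable
    have hgeint : Integrable (g ∘ ⇑e) μ := (hfe.integrable_comp hg.aestronglyMeasurable).2 hgint
    -- rewrite the integral against the mapped measure
    have hmap : (fun x => ∫ y, g y ∂(Measure.map (⇑e) (κ (⇑e.symm x)))) =
        fun x => ∫ y, g (e y) ∂(κ (⇑e.symm x)) := by
      funext x
      exact integral_map e.measurable.aemeasurable hg.aestronglyMeasurable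
    -- from the defining property of κ, composed with e.symm
    have h1 : (fun x => ∫ y, g (e y) ∂(κ x)) =ᵐ[μ] μ[g ∘ ⇑e | m] := by
      simpa [Function.comp] using hκ (g ∘ ⇑e) hge ⟨C, fun x => hC (e x)⟩
    have h2 : (fun x => ∫ y, g (e y) ∂(κ (⇑e.symm x))) =ᵐ[μ]
        (μ[g ∘ ⇑e | m]) ∘ ⇑e.symm := by
      have h1' : (fun x => ∫ y, g (e y) ∂(κ x)) =ᵐ[μ.map ⇑e.symm] μ[g ∘ ⇑e | m] := by
        rw [hfe'.map_eq]; exact h1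
      exact ae_eq_comp hfe'.measurable.aemeasurable h1'
    -- equivariance of conditional expectation
    have h3 : ((μ[g ∘ ⇑e | m]) ∘ ⇑e.symm) =ᵐ[μ] μ[g | m'] := by
      set ψ : X → ℝ := μ[g ∘ ⇑e | m] with hψ
      have hψm : Measurable[m] ψ := stronglyMeasurable_condExp.measurable
      have hψint : Integrable ψ μ := integrable_condExp
      have hcomp_meas : Measurable[m'] (ψ ∘ ⇑e.symm) := by
        intro A hA
        have hA' : MeasurableSet[m] (ψ ⁻¹' A) := hψm hA
        have heq : ⇑e ⁻¹' (⇑e.symm ⁻¹' (ψ ⁻¹' A)) = ψ ⁻¹' A := by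
          ext x; simp
        rw [hm'_iff]
        show MeasurableSet[m] (⇑e ⁻¹' (⇑e.symm ⁻¹' (ψ ⁻¹' A)))
        rwa [heq]
      have hcomp_int : Integrable (ψ ∘ ⇑e.symm) μ :=
        (hfe'.integrable_comp hψint.aestronglyMeasurable).2 hψint
      refine ae_eq_condExp_of_forall_setIntegral_eq hm' hgint
        (fun s _ _ => hcomp_int.integrableOn) (fun s hs hμs => ?_)
        (StronglyMeasurable.aestronglyMeasurable hcomp_meas.stronglyMeasurable)
      have hsm : MeasurableSet[m] (⇑e ⁻¹' s) := (hm'_iff s).1 hs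
      calc ∫ x in s, (ψ ∘ ⇑e.symm) x ∂μ
          = ∫ x in ⇑e ⁻¹' s, (ψ ∘ ⇑e.symm) (e x) ∂μ :=
            (hfe.setIntegral_preimage_emb e.measurableEmbedding _ s).symm
        _ = ∫ x in ⇑e ⁻¹' s, ψ x ∂μ := by
            refine setIntegral_congr_fun (hm _ hsm) fun x _ => ?_
            simp [Function.comp]
        _ = ∫ x in ⇑e ⁻¹' s, (g ∘ ⇑e) x ∂μ := setIntegral_condExp hm hgeint hsm
        _ = ∫ x in s, g x ∂μ :=
            hfe.setIntegral_preimage_emb e.measurableEmbedding g s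
    calc (fun x => ∫ y, g y ∂(κn x))
        =ᵐ[μ] μ[g | m'] := hκn g hg ⟨C, hC⟩
      _ =ᵐ[μ] (μ[g ∘ ⇑e | m]) ∘ ⇑e.symm := h3.symm
      _ =ᵐ[μ] (fun x => ∫ y, g (e y) ∂(κ (⇑e.symm x))) := h2.symm
      _ = (fun x => ∫ y, g y ∂(Measure.map (⇑e) (κ (⇑e.symm x)))) := hmap.symm
  -- a countable π-system generating the Borel σ-algebra
  set seq : ℕ → Set X := MeasurableSpace.natGeneratingSequence X with hseq
  have hseq_meas : ∀ i, MeasurableSet (seq i) :=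
    MeasurableSpace.measurableSet_natGeneratingSequence
  set T : Set (Set X) :=
    (fun F : Finset ℕ => ⋂ i ∈ F, seq i) '' {F : Finset ℕ | F.Nonempty} with hT
  have hT_count : T.Countable := (Set.to_countable _).image _
  have hT_meas : ∀ s ∈ T, MeasurableSet s := by
    rintro s ⟨F, -, rfl⟩
    exact Finset.measurableSet_biInter F fun i _ => hseq_meas i
  have hT_pi : IsPiSystem T := by
    rintro s ⟨F, hF, rfl⟩ t ⟨G, hG, rfl⟩ -
    refine ⟨F ∪ G, ?_, ?_⟩
    · obtain ⟨i, hi⟩ := hF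
      exact ⟨i, Finset.mem_union_left _ hi⟩
    · show (⋂ i ∈ F ∪ G, seq i) = (⋂ i ∈ F, seq i) ∩ ⋂ i ∈ G, seq i
      exact Finset.set_biInter_inter F G seq
  have hT_gen : mX = MeasurableSpace.generateFrom T := by
    refine le_antisymm ?_ (MeasurableSpace.generateFrom_le hT_meas)
    conv_lhs => rw [← MeasurableSpace.generateFrom_natGeneratingSequence X]
    refine MeasurableSpace.generateFrom_mono ?_
    rintro s ⟨i, rfl⟩
    exact ⟨{i}, ⟨i, Finset.mem_singleton_self i⟩, Finset.set_biInter_singleton i seq⟩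
  -- per-set a.e. equality
  have hsets : ∀ s ∈ T, ∀ᵐ x ∂μ,
      κn x s = Measure.map (⇑e) (κ (⇑e.symm x)) s := by
    intro s hs
    have hsmeas : MeasurableSet s := hT_meas s hs
    have hgmeas : Measurable (s.indicator (fun _ => (1 : ℝ))) :=
      measurable_const.indicator hsmeas
    have hgbd : ∃ C : ℝ, ∀ x, |s.indicator (fun _ => (1 : ℝ)) x| ≤ C := by
      refine ⟨1, fun x => ?_⟩
      by_cases hx : x ∈ s <;> simp [Set.indicator, hx]
    filter_upwards [key _ hgmeas hgbd] with x hx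
    haveI := hκnprob x
    haveI : IsProbabilityMeasure (Measure.map (⇑e) (κ (⇑e.symm x))) := by
      haveI := hκprob (⇑e.symm x)
      exact Measure.isProbabilityMeasure_map e.measurable.aemeasurable
    have h1 : ((κn x) s).toReal = ((Measure.map (⇑e) (κ (⇑e.symm x))) s).toReal := by
      have e1 : ∫ y, s.indicator (fun _ => (1 : ℝ)) y ∂(κn x) = ((κn x) s).toReal := by
        have := integral_indicator_one (μ := κn x) hsmeas
        simp only [Measure.real] at this
        exact this
      have e2 : ∫ y, s.indicator (fun _ => (1 : ℝ)) y ∂(Measure.map (⇑e) (κ (⇑e.symm x)))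
          = ((Measure.map (⇑e) (κ (⇑e.symm x))) s).toReal := by
        have := integral_indicator_one (μ := Measure.map (⇑e) (κ (⇑e.symm x))) hsmeas
        simp only [Measure.real] at this
        exact this
      rw [← e1, ← e2]; exact hx
    exact (ENNReal.toReal_eq_toReal_iff' (measure_ne_top _ _) (measure_ne_top _ _)).1 h1
  have hall : ∀ᵐ x ∂μ, ∀ s ∈ T, κn x s = Measure.map (⇑e) (κ (⇑e.symm x)) s :=
    (ae_ball_iff hT_count).2 hsets
  filter_upwards [hall] with x hx
  haveI := hκnprob x
  haveI : IsProbabilityMeasure (Measure.map (⇑e) (κ (⇑e.symm x))) := by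
    haveI := hκprob (⇑e.symm x)
    exact Measure.isProbabilityMeasure_map e.measurable.aemeasurable
  exact ext_of_generate_finite T hT_gen hT_pi hx (by simp)

/-- Equivariance of regular conditional distributions under a measure-preserving
bijection: if `κ` is a regular conditional distribution of `μ` given the
sub-σ-algebra `m`, and `κn` is a regular conditional distribution of `μ` given the
image σ-algebra `m.map (f^[n])`, then for `μ`-a.e. `x`,
`κn x = (f^[n])_* (κ (f⁻¹^[n] x))`. -/
theorem stmt2 {X : Type*} {m : MeasurableSpace X} [mX : MeasurableSpace X]
    [StandardBorelSpace X]
    (μ : Measure X) [IsProbabilityMeasure μ]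
    (f : X ≃ᵐ X) (hf : MeasurePreserving f μ μ)
    (hm : m ≤ mX)
    (n : ℕ) (κ κn : X → Measure X)
    (hκmeas : Measurable[m] κ)
    (hκprob : ∀ x, IsProbabilityMeasure (κ x))
    (hκ : ∀ g : X → ℝ, Measurable g → (∃ C : ℝ, ∀ x, |g x| ≤ C) →
      (fun x => ∫ y, g y ∂(κ x)) =ᵐ[μ] μ[g | m])
    (hκnmeas : Measurable[MeasurableSpace.map ((⇑f)^[n]) m] κn)
    (hκnprob : ∀ x, IsProbabilityMeasure (κn x))
    (hκn : ∀ g : X → ℝ, Measurable g → (∃ C : ℝ, ∀ x, |g x| ≤ C) →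
      (fun x => ∫ y, g y ∂(κn x)) =ᵐ[μ] μ[g | MeasurableSpace.map ((⇑f)^[n]) m]) :
    ∀ᵐ x ∂μ, κn x = Measure.map ((⇑f)^[n]) (κ ((⇑f.symm)^[n] x)) := by
  let e : X ≃ᵐ X :=
    { toFun := (⇑f)^[n]
      invFun := (⇑f.symm)^[n]
      left_inv := Function.LeftInverse.iterate f.symm_apply_apply n
      right_inv := Function.LeftInverse.iterate f.apply_symm_apply n
      measurable_toFun := f.measurable.iterate n
      measurable_invFun := f.symm.measurable.iterate n }
  exact stmt2_aux (m := m) (m' := MeasurableSpace.map ((⇑f)^[n]) m) μ e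
    (hf.iterate n) ((hf.symm f).iterate n) hm (fun s => Iff.rfl)
    κ κn hκprob hκ hκnprob hκn
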